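/- Let G be a forest in which every vertex has a bootstrap-percolation threshold at least 2, and let A be a seed set of size k ≥ 1. Then the number of additional vertices activated from A is strictly less than k, i.e. |⟨A⟩ ∖ A| < k. -/

import Mathlib

noncomputable section

/-- One step of bootstrap percolation on `G` with thresholds `t`: to the currently
infected set `A` we add every vertex having at least `t v` infected neighbors. -/
def bootStep {V : Type} (G : SimpleGraph V) (t : V → ℕ) (A : Set V) : Set V :=
  A ∪ {v : V | t v ≤ (A ∩ G.neighborSet v).ncard}

/-- `⟨A⟩`: the set of vertices eventually infected from the seed set `A` under
bootstrap percolation on `G` with thresholds `t`. -/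
def bootClosure {V : Type} (G : SimpleGraph V) (t : V → ℕ) (A : Set V) : Set V :=
  ⋃ i : ℕ, (bootStep G t)^[i] A

open SimpleGraph Finset



lemma exists_leaf {V : Type} [Fintype V] [DecidableEq V] (G : SimpleGraph V)
    [DecidableRel G.Adj] (hG : G.IsAcyclic) (S : Finset V) (hS : S.Nonempty) :
    ∃ v ∈ S, (S.filter (G.Adj v)).card ≤ 1 := by
  classical
  by_contra hcon
  push_neg at hcon
  set P : ℕ → Prop := fun n => ∃ (a b : V) (p : G.Walk a b), p.IsPath ∧
      (∀ x ∈ p.support, x ∈ S) ∧ p.length = n with hPdef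
  obtain ⟨v0, hv0⟩ := hS
  have hP0 : P 0 := ⟨v0, v0, Walk.nil, by simp, by simpa using hv0, rfl⟩
  have hup : ∀ n, P n → n < Fintype.card V := by
    rintro n ⟨a, b, p, hp, -, rfl⟩
    exact hp.length_lt
  set N := Nat.findGreatest P (Fintype.card V) with hN
  have hPN : P N := Nat.findGreatest_spec (Nat.zero_le _) hP0
  have hmax : ¬ P (N + 1) := by
    by_cases h : N + 1 ≤ Fintype.card V
    · exact Nat.findGreatest_is_greatest (Nat.lt_succ_self N) h
    · exact fun hp => h (le_of_lt (hup _ hp))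
  obtain ⟨a, b, p, hp, hsup, hlen⟩ := hPN
  have haS : a ∈ S := hsup a p.start_mem_support
  obtain ⟨x, hx, y, hy, hxy⟩ := Finset.one_lt_card.mp (hcon a haS)
  -- every neighbor of `a` inside `S` lies on the path
  have key : ∀ w ∈ S.filter (G.Adj a), w ∈ p.support := by
    intro w hw
    by_contra hns
    have adj : G.Adj w a := ((Finset.mem_filter.mp hw).2).symm
    refine hmax ⟨w, b, Walk.cons adj p, ?_, ?_, by simp [hlen]⟩
    · rw [Walk.cons_isPath_iff]; exact ⟨hp, hns⟩
    · intro z hz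
      rw [Walk.support_cons] at hz
      rcases List.mem_cons.mp hz with rfl | hz
      · exact (Finset.mem_filter.mp hw).1
      · exact hsup z hz
  have hatail : a ∉ p.support.tail := by
    have h1 := hp.support_nodup
    rw [p.support_eq_cons] at h1
    exact (List.nodup_cons.mp h1).1
  -- a dart from an edge s(a,w) must start at a
  have dartof : ∀ w ∈ S.filter (G.Adj a), s(a, w) ∈ p.edges →
      ∃ d ∈ p.darts, d.fst = a ∧ d.snd = w := by
    intro w hw he
    obtain ⟨d, hd, hde⟩ := List.mem_map.mp he
    have : s(d.fst, d.snd) = s(a, w) := hde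
    rw [Sym2.eq_iff] at this
    rcases this with ⟨h1, h2⟩ | ⟨h1, h2⟩
    · exact ⟨d, hd, h1, h2⟩
    · exfalso
      apply hatail
      rw [← Walk.map_snd_darts]
      exact List.mem_map.mpr ⟨d, hd, h2⟩
  -- one of x, y gives an edge not on the path
  have hxyedge : (s(a, x) ∉ p.edges) ∨ (s(a, y) ∉ p.edges) := by
    by_contra h'
    push_neg at h'
    obtain ⟨dx, hdx, hdx1, hdx2⟩ := dartof x hx h'.1
    obtain ⟨dy, hdy, hdy1, hdy2⟩ := dartof y hy h'.2
    have hnd : (p.darts.map (·.fst)).Nodup := by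
      rw [Walk.map_fst_darts]
      exact (List.dropLast_sublist _).nodup hp.support_nodup
    have : dx = dy := List.inj_on_of_nodup_map hnd hdx hdy (by rw [hdx1, hdy1])
    exact hxy (by rw [← hdx2, ← hdy2, this])
  obtain ⟨w, hw, hwe⟩ : ∃ w ∈ S.filter (G.Adj a), s(a, w) ∉ p.edges := by
    rcases hxyedge with h | h
    exacts [⟨x, hx, h⟩, ⟨y, hy, h⟩]
  have hwsup : w ∈ p.support := key w hw
  have adj : G.Adj w a := ((Finset.mem_filter.mp hw).2).symm
  have hcyc : (Walk.cons adj (p.takeUntil w hwsup)).IsCycle := by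
    rw [Walk.cons_isCycle_iff]
    refine ⟨hp.takeUntil hwsup, fun hmem => hwe ?_⟩
    have := Walk.edges_takeUntil_subset p hwsup hmem
    rwa [Sym2.eq_swap] at this
  exact hG _ hcyc


def pairsIn {V : Type} [Fintype V] (G : SimpleGraph V) [DecidableRel G.Adj]
    (S : Finset V) : Finset (V × V) :=
  (S ×ˢ S).filter fun p => G.Adj p.1 p.2

lemma pairsIn_bound {V : Type} [Fintype V] [DecidableEq V] (G : SimpleGraph V)
    [DecidableRel G.Adj] (hG : G.IsAcyclic) :
    ∀ n (S : Finset V), S.card = n → S.Nonempty → (pairsIn G S).card + 2 ≤ 2 * n := by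
  intro n
  induction n using Nat.strong_induction_on with
  | _ n ih =>
    intro S hcard hS
    obtain ⟨v, hv, hdeg⟩ := exists_leaf G hG S hS
    have hsub : pairsIn G S ⊆ pairsIn G (S.erase v) ∪
        ((S.filter (G.Adj v)).image (fun w => (v, w))) ∪
        ((S.filter (G.Adj v)).image (fun w => (w, v))) := by
      intro p hp
      obtain ⟨hmem, hadj⟩ := Finset.mem_filter.mp hp
      obtain ⟨h1, h2⟩ := Finset.mem_product.mp hmem
      simp only [Finset.mem_union]
      by_cases e1 : p.1 = v
      · refine Or.inl (Or.inr (Finset.mem_image.mpr ⟨p.2, ?_, ?_⟩))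
        · exact Finset.mem_filter.mpr ⟨h2, e1 ▸ hadj⟩
        · rw [← e1]
      · by_cases e2 : p.2 = v
        · refine Or.inr (Finset.mem_image.mpr ⟨p.1, ?_, ?_⟩)
          · exact Finset.mem_filter.mpr ⟨h1, (e2 ▸ hadj).symm⟩
          · rw [← e2]
        · refine Or.inl (Or.inl ?_)
          refine Finset.mem_filter.mpr ⟨Finset.mem_product.mpr ⟨?_, ?_⟩, hadj⟩
          · exact Finset.mem_erase.mpr ⟨e1, h1⟩
          · exact Finset.mem_erase.mpr ⟨e2, h2⟩
    have hle : (pairsIn G S).card ≤ (pairsIn G (S.erase v)).card + 1 + 1 := by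
      calc (pairsIn G S).card ≤ _ := Finset.card_le_card hsub
        _ ≤ (pairsIn G (S.erase v)).card +
              ((S.filter (G.Adj v)).image (fun w => (v, w))).card +
              ((S.filter (G.Adj v)).image (fun w => (w, v))).card := by
            exact le_trans (Finset.card_union_le _ _)
              (by gcongr; exact Finset.card_union_le _ _)
        _ ≤ (pairsIn G (S.erase v)).card + 1 + 1 := by
            gcongr <;> exact le_trans (Finset.card_image_le) hdeg
    by_cases he : (S.erase v).Nonempty
    · have hc' : (S.erase v).card = n - 1 := by
        rw [Finset.card_erase_of_mem hv, hcard]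
      have hn1 : 1 ≤ n := by
        rw [← hcard]; exact Finset.card_pos.mpr hS
      have hn2 : 2 ≤ n := by
        have h1 : 0 < (S.erase v).card := Finset.card_pos.mpr he
        have h2 : 1 ≤ n := hcard ▸ Finset.card_pos.mpr hS
        omega
      have := ih (n - 1) (by omega) (S.erase v) hc' he
      omega
    · have hSv : S = {v} := by
        rw [Finset.not_nonempty_iff_eq_empty] at he
        have := (Finset.erase_eq_empty_iff S v).mp he
        rcases this with h | h
        · exact absurd (h ▸ hv) (Finset.notMem_empty v)
        · exact h
      have : pairsIn G S = ∅ := by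
        subst hSv
        ext p
        simp only [pairsIn, Finset.mem_filter, Finset.mem_product, Finset.mem_singleton,
          Finset.notMem_empty, iff_false]
        rintro ⟨⟨e1, e2⟩, hadj⟩
        rw [e1, e2] at hadj
        exact G.irrefl hadj
      have hn : n = 1 := by rw [← hcard, hSv]; simp
      rw [this, hn]
      simp
lemma pairsIn_step {V : Type} [Fintype V] [DecidableEq V] (G : SimpleGraph V)
    [DecidableRel G.Adj] (B N : Finset V) (hdisj : Disjoint N B)
    (h : ∀ v ∈ N, 2 ≤ (B.filter (G.Adj v)).card) :
    (pairsIn G B).card + 4 * N.card ≤ (pairsIn G (B ∪ N)).card := by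
  set F1 : Finset (V × V) := N.biUnion (fun v => ({v} : Finset V) ×ˢ (B.filter (G.Adj v)))
    with hF1
  set F2 : Finset (V × V) := N.biUnion (fun v => (B.filter (G.Adj v)) ×ˢ ({v} : Finset V))
    with hF2
  have hmemF1 : ∀ p : V × V, p ∈ F1 ↔ p.1 ∈ N ∧ p.2 ∈ B ∧ G.Adj p.1 p.2 := by
    intro p
    simp only [hF1, Finset.mem_biUnion, Finset.mem_product, Finset.mem_singleton,
      Finset.mem_filter]
    constructor
    · rintro ⟨v, hv, rfl, hw, hadj⟩
      exact ⟨hv, hw, hadj⟩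
    · rintro ⟨hv, hw, hadj⟩
      exact ⟨p.1, hv, rfl, hw, hadj⟩
  have hmemF2 : ∀ p : V × V, p ∈ F2 ↔ p.2 ∈ N ∧ p.1 ∈ B ∧ G.Adj p.2 p.1 := by
    intro p
    simp only [hF2, Finset.mem_biUnion, Finset.mem_product, Finset.mem_singleton,
      Finset.mem_filter]
    constructor
    · rintro ⟨v, hv, ⟨hw, hadj⟩, rfl⟩
      exact ⟨hv, hw, hadj⟩
    · rintro ⟨hv, hw, hadj⟩
      exact ⟨p.2, hv, ⟨hw, hadj⟩, rfl⟩
  have hNB : ∀ x, x ∈ N → x ∉ B := fun x hx hb =>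
    Finset.disjoint_left.mp hdisj hx hb
  have hsub : pairsIn G B ∪ F1 ∪ F2 ⊆ pairsIn G (B ∪ N) := by
    intro p hp
    simp only [Finset.mem_union] at hp
    simp only [pairsIn, Finset.mem_filter, Finset.mem_product, Finset.mem_union]
    rcases hp with (hp | hp) | hp
    · obtain ⟨hm, hadj⟩ := Finset.mem_filter.mp hp
      obtain ⟨h1, h2⟩ := Finset.mem_product.mp hm
      exact ⟨⟨Or.inl h1, Or.inl h2⟩, hadj⟩
    · obtain ⟨h1, h2, hadj⟩ := (hmemF1 p).mp hp
      exact ⟨⟨Or.inr h1, Or.inl h2⟩, hadj⟩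
    · obtain ⟨h1, h2, hadj⟩ := (hmemF2 p).mp hp
      exact ⟨⟨Or.inl h2, Or.inr h1⟩, hadj.symm⟩
  have hd1 : Disjoint (pairsIn G B) F1 := by
    rw [Finset.disjoint_left]
    intro p hp hp1
    obtain ⟨hm, -⟩ := Finset.mem_filter.mp hp
    exact hNB p.1 ((hmemF1 p).mp hp1).1 (Finset.mem_product.mp hm).1
  have hd2 : Disjoint (pairsIn G B ∪ F1) F2 := by
    rw [Finset.disjoint_left]
    intro p hp hp2
    obtain ⟨h1, h2, -⟩ := (hmemF2 p).mp hp2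
    rcases Finset.mem_union.mp hp with hp | hp
    · obtain ⟨hm, -⟩ := Finset.mem_filter.mp hp
      exact hNB p.2 h1 (Finset.mem_product.mp hm).2
    · exact hNB p.2 h1 ((hmemF1 p).mp hp).2.1
  have hcard1 : 2 * N.card ≤ F1.card := by
    rw [hF1, Finset.card_biUnion]
    · calc 2 * N.card = ∑ _v ∈ N, 2 := by rw [Finset.sum_const, smul_eq_mul, mul_comm]
        _ ≤ ∑ v ∈ N, (({v} : Finset V) ×ˢ (B.filter (G.Adj v))).card := by
            apply Finset.sum_le_sum
            intro v hv
            rw [Finset.card_product, Finset.card_singleton, one_mul]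
            exact h v hv
    · intro x hx y hy hxy
      rw [Function.onFun_apply, Finset.disjoint_left]
      rintro p hp hq
      obtain ⟨e1, -⟩ := Finset.mem_product.mp hp
      obtain ⟨e2, -⟩ := Finset.mem_product.mp hq
      rw [Finset.mem_singleton] at e1 e2
      exact hxy (e1 ▸ e2 ▸ rfl)
  have hcard2 : 2 * N.card ≤ F2.card := by
    rw [hF2, Finset.card_biUnion]
    · calc 2 * N.card = ∑ _v ∈ N, 2 := by rw [Finset.sum_const, smul_eq_mul, mul_comm]
        _ ≤ ∑ v ∈ N, ((B.filter (G.Adj v)) ×ˢ ({v} : Finset V)).card := by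
            apply Finset.sum_le_sum
            intro v hv
            rw [Finset.card_product, Finset.card_singleton, mul_one]
            exact h v hv
    · intro x hx y hy hxy
      rw [Function.onFun_apply, Finset.disjoint_left]
      rintro p hp hq
      obtain ⟨-, e1⟩ := Finset.mem_product.mp hp
      obtain ⟨-, e2⟩ := Finset.mem_product.mp hq
      rw [Finset.mem_singleton] at e1 e2
      exact hxy (e1 ▸ e2 ▸ rfl)
  calc (pairsIn G B).card + 4 * N.card
      ≤ (pairsIn G B).card + F1.card + F2.card := by omega
    _ = (pairsIn G B ∪ F1 ∪ F2).card := by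
        rw [Finset.card_union_of_disjoint hd2, Finset.card_union_of_disjoint hd1]
    _ ≤ (pairsIn G (B ∪ N)).card := Finset.card_le_card hsub

/-- In a forest in which every vertex has threshold at least 2, a seed
set of size k ≥ 1 activates strictly fewer than k additional vertices. -/
theorem forest_spread_lt {V : Type} [Fintype V] (G : SimpleGraph V)
    (hforest : G.IsAcyclic) (t : V → ℕ) (ht : ∀ v, 2 ≤ t v)
    (A : Set V) (k : ℕ) (hA : A.ncard = k) (hk : 1 ≤ k) :
    (bootClosure G t A \ A).ncard < k := by
  classical
  set B : ℕ → Set V := fun i => (bootStep G t)^[i] A with hB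
  have hBsucc : ∀ i, B (i + 1) = bootStep G t (B i) := by
    intro i
    simp only [hB, Function.iterate_succ_apply']
  have hmono : ∀ i, B i ⊆ B (i + 1) := by
    intro i
    rw [hBsucc i]
    exact Set.subset_union_left
  have hchain : ∀ i j, i ≤ j → B i ⊆ B j := by
    intro i j hij
    induction j, hij using Nat.le_induction with
    | base => exact subset_rfl
    | succ j hij ih => exact ih.trans (hmono j)
  -- invariant
  have hinv : ∀ i, 4 * ((B i \ A).ncard) ≤ (pairsIn G (B i).toFinset).card := by
    intro i
    induction i with
    | zero => simp [hB]
    | succ i ih =>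
      set N : Set V := B (i + 1) \ B i with hN
      have hNB : Disjoint N.toFinset (B i).toFinset := by
        rw [Finset.disjoint_left]
        intro x hx hb
        rw [Set.mem_toFinset] at hx hb
        exact hx.2 hb
      have hunion : (B (i + 1)).toFinset = (B i).toFinset ∪ N.toFinset := by
        ext x
        rw [Finset.mem_union, Set.mem_toFinset, Set.mem_toFinset, Set.mem_toFinset, hN]
        constructor
        · intro hx
          by_cases hb : x ∈ B i
          · exact Or.inl hb
          · exact Or.inr ⟨hx, hb⟩
        · rintro (hx | hx)
          · exact hmono i hx
          · exact hx.1
      have hdeg : ∀ v ∈ N.toFinset, 2 ≤ ((B i).toFinset.filter (G.Adj v)).card := by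
        intro v hv
        rw [Set.mem_toFinset, hN] at hv
        have hv2 : v ∈ {v : V | t v ≤ (B i ∩ G.neighborSet v).ncard} := by
          have := hv.1
          rw [hBsucc i, bootStep] at this
          rcases this with h | h
          · exact absurd h hv.2
          · exact h
        have heq : (B i ∩ G.neighborSet v).ncard = ((B i).toFinset.filter (G.Adj v)).card := by
          rw [Set.ncard_eq_toFinset_card']
          congr 1
          ext w
          simp [Set.mem_toFinset, SimpleGraph.mem_neighborSet]
        calc 2 ≤ t v := ht v
          _ ≤ (B i ∩ G.neighborSet v).ncard := hv2
          _ = _ := heq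
      have hstep := pairsIn_step G (B i).toFinset N.toFinset hNB hdeg
      have hdiff : (B (i + 1) \ A).ncard ≤ (B i \ A).ncard + N.toFinset.card := by
        have hsub : B (i + 1) \ A ⊆ (B i \ A) ∪ N := by
          intro x hx
          by_cases hb : x ∈ B i
          · exact Or.inl ⟨hb, hx.2⟩
          · exact Or.inr ⟨hx.1, hb⟩
        calc (B (i + 1) \ A).ncard ≤ ((B i \ A) ∪ N).ncard :=
              Set.ncard_le_ncard hsub (Set.toFinite _)
          _ ≤ (B i \ A).ncard + N.ncard := Set.ncard_union_le _ _
          _ = (B i \ A).ncard + N.toFinset.card := by rw [Set.ncard_eq_toFinset_card' N]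
      calc 4 * (B (i + 1) \ A).ncard ≤ 4 * (B i \ A).ncard + 4 * N.toFinset.card := by omega
        _ ≤ (pairsIn G (B i).toFinset).card + 4 * N.toFinset.card := by omega
        _ ≤ (pairsIn G ((B i).toFinset ∪ N.toFinset)).card := hstep
        _ = (pairsIn G (B (i + 1)).toFinset).card := by rw [hunion]
  -- stabilization
  obtain ⟨n, hn⟩ : ∃ n, B (n + 1) = B n := by
    by_contra hcon
    push_neg at hcon
    have hss : ∀ i, B i ⊂ B (i + 1) := fun i => ⟨hmono i, fun h =>
      hcon i (subset_antisymm h (hmono i))⟩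
    have hgrow : ∀ i, i ≤ (B i).ncard := by
      intro i
      induction i with
      | zero => exact Nat.zero_le _
      | succ i ih =>
        have := Set.ncard_lt_ncard (hss i) (Set.toFinite _)
        omega
    have h1 := hgrow (Fintype.card V + 1)
    have h2 : (B (Fintype.card V + 1)).ncard ≤ Fintype.card V := by
      calc (B (Fintype.card V + 1)).ncard ≤ (Set.univ : Set V).ncard :=
            Set.ncard_le_ncard (Set.subset_univ _) Set.finite_univ
        _ = Fintype.card V := by rw [Set.ncard_univ, Nat.card_eq_fintype_card]
    omega
  have hfix : ∀ m, B (n + m) = B n := by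
    intro m
    induction m with
    | zero => rfl
    | succ m ih => rw [← Nat.add_assoc, hBsucc, ih, ← hBsucc, hn]
  have hclos : bootClosure G t A = B n := by
    apply subset_antisymm
    · apply Set.iUnion_subset
      intro i
      rcases Nat.le_total i n with h | h
      · exact hchain i n h
      · obtain ⟨m, rfl⟩ := Nat.exists_eq_add_of_le h
        exact (hfix m).subset
    · exact Set.subset_iUnion (fun i => (bootStep G t)^[i] A) n
  -- final counting
  have hAB : A ⊆ B n := hchain 0 n (Nat.zero_le n)
  have hScard : (B n).ncard = (B n \ A).ncard + k := by
    rw [← hA]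
    exact (Set.ncard_diff_add_ncard_of_subset hAB (Set.toFinite _)).symm
  have hSne : (B n).toFinset.Nonempty := by
    rw [Finset.nonempty_iff_ne_empty]
    intro h
    have : (B n).toFinset.card = 0 := by rw [h]; rfl
    rw [← Set.ncard_eq_toFinset_card', hScard] at this
    omega
  have hforestbd := pairsIn_bound G hforest (B n).toFinset.card (B n).toFinset rfl hSne
  have hcardeq : (B n).toFinset.card = (B n \ A).ncard + k := by
    rw [← Set.ncard_eq_toFinset_card', hScard]
  have h4 := hinv n
  rw [hclos]
  omega
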